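/- Let R be a commutative Noetherian ring, 𝔞 an ideal of R, and M, N finitely generated R-modules such that M = Γ_𝔞(M) and cd(𝔞, N) = 1. Then H^i_𝔞(M, N) is a finitely generated R-module for all i ≥ 0. -/

import Mathlib

/-!
Formalization of a statement about generalized local cohomology.

`genLocalCohomology I i M N` is the generalized local cohomology module
`H^i_I(M, N) = colim_n Ext^i_R(M/IⁿM, N)`, the direct limit over `n` of the Ext
modules along the maps induced by the natural surjections `M/Iⁿ⁺¹M → M/IⁿM`.
`Mathlib`'s `localCohomology I i` is the ordinary local cohomology functor
(the direct limit of `Ext^i(R/Iⁿ, -)`).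
-/

open CategoryTheory CategoryTheory.Limits Opposite

noncomputable section

universe u

variable {R : Type u} [CommRing R]

/-- The directed system `n ↦ M ⧸ IⁿM` (indexed by `ℕᵒᵖ`), with the maps being the
natural surjections `M/Iⁿ⁺¹M → M/IⁿM`. -/
def modIdealPowersDiagram (I : Ideal R) (M : Type u) [AddCommGroup M] [Module R M] :
    ℕᵒᵖ ⥤ ModuleCat.{u} R where
  obj t := ModuleCat.of R (M ⧸ (I ^ (unop t) • ⊤ : Submodule R M))
  map {t t'} w := ModuleCat.ofHom (Submodule.mapQ _ _ LinearMap.id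
    (by
      rw [Submodule.comap_id]
      exact Submodule.smul_mono (Ideal.pow_le_pow_right w.unop.down.down) le_rfl))
  map_id t := by
    ext : 1
    exact Submodule.mapQ_id _
  map_comp {a b c} f g := by
    ext : 1
    dsimp only [ModuleCat.hom_comp, ModuleCat.hom_ofHom]
    rw [← Submodule.mapQ_comp]
    rfl

/-- The generalized local cohomology module
`H^i_I(M, N) = colim_n Ext^i_R(M/IⁿM, N)`. -/
def genLocalCohomology (I : Ideal R) (i : ℕ) (M : Type u) [AddCommGroup M] [Module R M]
    (N : ModuleCat.{u} R) : ModuleCat.{u} R :=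
  colimit (((modIdealPowersDiagram I M).op ⋙ Ext R (ModuleCat.{u} R) i).flip.obj N)

/-- `Ext^i_R(M, N)`, as an object of `ModuleCat R`. -/
def extModule (i : ℕ) (M N : ModuleCat.{u} R) : ModuleCat.{u} R :=
  ((Ext R (ModuleCat.{u} R) i).obj (op M)).obj N

/-- The `I`-torsion submodule `Γ_I(X) = {x ∈ X | Iⁿx = 0 for some n}` of `X`. -/
def torsionGamma (I : Ideal R) (X : Type u) [AddCommGroup X] [Module R X] : Submodule R X :=
  ⨆ n : ℕ, Submodule.torsionBySet R X ((I ^ n : Ideal R) : Set R)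

/-- An `R`-module `X` is `I`-cofinite if `Supp(X) ⊆ V(I)` and `Ext^i_R(R/I, X)` is a
finitely generated `R`-module for all `i`. -/
def IsCofinite (I : Ideal R) (X : ModuleCat.{u} R) : Prop :=
  Module.support R X ⊆ PrimeSpectrum.zeroLocus (I : Set R) ∧
    ∀ i : ℕ, Module.Finite R (extModule i (ModuleCat.of R (R ⧸ I)) X)


/-! ### Auxiliary constructions for the proof -/

section AuxResolution

variable (R : Type u) [CommRing R] [IsNoetherianRing R]

/-- number of generators of a chosen finite presentation -/
def finPresN (X : Type u) [AddCommGroup X] [Module R X] [Module.Finite R X] : ℕ :=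
  (Module.Finite.exists_fin' R X).choose

def finPresMap (X : Type u) [AddCommGroup X] [Module R X] [Module.Finite R X] :
    (Fin (finPresN R X) → R) →ₗ[R] X :=
  (Module.Finite.exists_fin' R X).choose_spec.choose

lemma finPresMap_surjective (X : Type u) [AddCommGroup X] [Module R X] [Module.Finite R X] :
    Function.Surjective (finPresMap R X) :=
  (Module.Finite.exists_fin' R X).choose_spec.choose_spec

variable (X : Type u) [AddCommGroup X] [Module R X] [Module.Finite R X]

/-- the syzygy tower: at stage `i` we record the number of generators of the previous kernel
and that kernel as a submodule of the free module. -/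
def syz : ℕ → Σ n : ℕ, Submodule R (Fin n → R)
  | 0 => ⟨finPresN R X, LinearMap.ker (finPresMap R X)⟩
  | (i+1) => ⟨finPresN R ↥(syz i).2, LinearMap.ker (finPresMap R ↥(syz i).2)⟩

/-- the differentials -/
def resd (i : ℕ) : (Fin (syz R X (i+1)).1 → R) →ₗ[R] (Fin (syz R X i).1 → R) :=
  (syz R X i).2.subtype ∘ₗ finPresMap R ↥(syz R X i).2

lemma resd_ker (i : ℕ) : LinearMap.ker (resd R X i) = (syz R X (i+1)).2 := by
  show LinearMap.ker ((syz R X i).2.subtype ∘ₗ finPresMap R ↥(syz R X i).2) = _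
  rw [LinearMap.ker_comp, Submodule.ker_subtype, Submodule.comap_bot]
  rfl

lemma resd_range (i : ℕ) : LinearMap.range (resd R X i) = (syz R X i).2 := by
  show LinearMap.range ((syz R X i).2.subtype ∘ₗ finPresMap R ↥(syz R X i).2) = _
  rw [LinearMap.range_comp, LinearMap.range_eq_top.mpr (finPresMap_surjective R _),
    Submodule.map_subtype_top]

lemma resd_comp (i : ℕ) : (resd R X i) ∘ₗ (resd R X (i+1)) = 0 := by
  rw [← LinearMap.range_le_ker_iff, resd_range, ← resd_ker]

/-- the finite free resolution complex -/
def finRes : ChainComplex (ModuleCat.{u} R) ℕ :=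
  ChainComplex.of (fun i => ModuleCat.of R (Fin (syz R X i).1 → R))
    (fun i => ModuleCat.ofHom (resd R X i))
    (fun i => by
      show ModuleCat.ofHom (resd R X (i+1)) ≫ ModuleCat.ofHom (resd R X i) = 0
      ext1
      rw [ModuleCat.hom_comp, ModuleCat.hom_ofHom, ModuleCat.hom_ofHom, ModuleCat.hom_zero]
      exact resd_comp R X i)

instance finRes_finite (i : ℕ) : Module.Finite R ((finRes R X).X i) :=
  inferInstanceAs (Module.Finite R (Fin (syz R X i).1 → R))

instance finRes_projective (i : ℕ) : Projective ((finRes R X).X i) :=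
  ModuleCat.projective_of_free (Pi.basisFun R (Fin (syz R X i).1))

lemma finRes_d (i : ℕ) : (finRes R X).d (i+1) i = ModuleCat.ofHom (resd R X i) :=
  ChainComplex.of_d (fun i => ModuleCat.of R (Fin (syz R X i).1 → R))
    (fun i => ModuleCat.ofHom (resd R X i)) i

lemma finRes_exactAt_succ (n : ℕ) : (finRes R X).ExactAt (n+1) := by
  rw [HomologicalComplex.exactAt_iff' _ (n+2) (n+1) n (by simp) (by simp)]
  apply (ShortComplex.moduleCat_exact_iff_range_eq_ker _).mpr
  dsimp [HomologicalComplex.sc', HomologicalComplex.shortComplexFunctor']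
  rw [finRes_d, finRes_d]
  exact (resd_range R X (n+1)).trans (resd_ker R X n).symm

lemma aug_w : ModuleCat.ofHom (resd R X 0) ≫ ModuleCat.ofHom (finPresMap R X) = 0 := by
  ext1
  show finPresMap R X ∘ₗ resd R X 0 = 0
  exact LinearMap.range_le_ker_iff.mp (le_of_eq (resd_range R X 0))

lemma aug_exact : (ShortComplex.mk _ _ (aug_w R X)).Exact := by
  apply (ShortComplex.moduleCat_exact_iff_range_eq_ker _).mpr
  exact resd_range R X 0

lemma aug_epi : Epi (ShortComplex.mk _ _ (aug_w R X)).g := by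
  rw [ModuleCat.epi_iff_surjective]
  exact finPresMap_surjective R X

/-- the augmentation -/
def finResπ : finRes R X ⟶ (ChainComplex.single₀ (ModuleCat.{u} R)).obj (ModuleCat.of R X) :=
  (ChainComplex.toSingle₀Equiv _ _).symm ⟨ModuleCat.ofHom (finPresMap R X), by
    rw [finRes_d]
    exact aug_w R X⟩

lemma finResπ_f_zero : (finResπ R X).f 0 = ModuleCat.ofHom (finPresMap R X) := by
  rw [finResπ]
  exact ChainComplex.toSingle₀Equiv_symm_apply_f_zero _ _

instance finResπ_quasiIso : QuasiIso (finResπ R X) := ⟨fun n => by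
  cases n with
  | zero =>
    rw [ChainComplex.quasiIsoAt₀_iff, ShortComplex.quasiIso_iff_of_zeros']
    · refine (ShortComplex.exact_and_epi_g_iff_of_iso ?_).2 ⟨aug_exact R X, aug_epi R X⟩
      refine ShortComplex.isoMk (Iso.refl _) (Iso.refl _) (Iso.refl _) ?_ ?_
      · dsimp
        exact (Category.id_comp _).trans ((finRes_d R X 0).symm.trans (Category.comp_id _).symm)
      · dsimp
        exact (Category.id_comp _).trans ((finResπ_f_zero R X).symm.trans (Category.comp_id _).symm)
    all_goals rfl
  | succ n =>
    exact (quasiIsoAt_iff_exactAt' (finResπ R X) (n+1)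
      (ChainComplex.exactAt_succ_single_obj _ _)).2 (finRes_exactAt_succ R X n)⟩

/-- a projective resolution of a finitely generated module by finite free modules -/
def finProjRes : ProjectiveResolution (ModuleCat.of R X) where
  complex := finRes R X
  π := finResπ R X

set_option maxHeartbeats 1000000 in
set_option synthInstance.maxHeartbeats 400000 in
lemma ext_finite (N : ModuleCat.{u} R) [Module.Finite R N] (i : ℕ) :
    Module.Finite R (((Ext R (ModuleCat.{u} R) i).obj (op (ModuleCat.of R X))).obj N) := by
  let P := finProjRes R X
  let K := P.complex.linearYonedaObj R N
  haveI : IsNoetherian R ↥(K.X i) := by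
    haveI := isNoetherian_linearMap R N ((finRes R X).X i)
    exact isNoetherian_of_linearEquiv (ModuleCat.homLinearEquiv (S := R) (M := (finRes R X).X i) (N := N)).symm
  haveI : IsNoetherian R ↥((K.sc i).X₂) := by
    haveI := isNoetherian_linearMap R N ((finRes R X).X i)
    exact isNoetherian_of_linearEquiv (ModuleCat.homLinearEquiv (S := R) (M := (finRes R X).X i) (N := N)).symm
  haveI h1 : Module.Finite R ↥(LinearMap.ker ((K.sc i).g.hom)) :=
    Module.Finite.iff_fg.mpr (IsNoetherian.noetherian _)
  haveI : Module.Finite R ((K.sc i).moduleCatLeftHomologyData.H) :=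
    inferInstanceAs (Module.Finite R (↥(LinearMap.ker ((K.sc i).g.hom)) ⧸
      LinearMap.range (K.sc i).moduleCatToCycles))
  have e : ((Ext R (ModuleCat.{u} R) i).obj (op (ModuleCat.of R X))).obj N ≅
      (K.sc i).moduleCatLeftHomologyData.H :=
    P.isoExt i N ≪≫ (K.sc i).moduleCatHomologyIso
  exact Module.Finite.equiv e.toLinearEquiv.symm

end AuxResolution

section AuxMain

variable {R : Type u} [CommRing R]

lemma mapQ_isIso {M : Type u} [AddCommGroup M] [Module R M] {p q : Submodule R M}
    (hpq : p = q) (h : p ≤ Submodule.comap LinearMap.id q) :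
    IsIso (show ModuleCat.of R (M ⧸ p) ⟶ ModuleCat.of R (M ⧸ q) from
      ModuleCat.ofHom (Submodule.mapQ p q LinearMap.id h)) := by
  subst hpq
  rw [show ModuleCat.ofHom (Submodule.mapQ p p LinearMap.id h) = 𝟙 (ModuleCat.of R (M ⧸ p)) from
    ModuleCat.hom_ext (Submodule.mapQ_id _)]
  infer_instance

lemma exists_pow_smul_bot (I : Ideal R) (M : Type u) [AddCommGroup M] [Module R M]
    [Module.Finite R M] (hM : torsionGamma I M = ⊤) :
    ∃ k : ℕ, (I ^ k • ⊤ : Submodule R M) = ⊥ := by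
  have hmono : Monotone (fun n : ℕ =>
      Submodule.torsionBySet R M ((I ^ n : Ideal R) : Set R)) := by
    intro a b hab
    exact Submodule.torsionBySet_le_torsionBySet_of_subset
      (SetLike.coe_subset_coe.2 (Ideal.pow_le_pow_right hab))
  have h1 : ∀ m : M, ∃ n : ℕ,
      m ∈ Submodule.torsionBySet R M ((I ^ n : Ideal R) : Set R) := by
    intro m
    have hm : m ∈ torsionGamma I M := hM ▸ Submodule.mem_top
    exact (Submodule.mem_iSup_of_directed _ hmono.directed_le).1 hm
  choose f hf using h1
  obtain ⟨S, hS⟩ := Module.Finite.fg_top (R := R) (M := M)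
  refine ⟨S.sup f, ?_⟩
  rw [eq_bot_iff]
  refine Submodule.smul_le.2 (fun r hr m _ => ?_)
  have hm : m ∈ Submodule.torsionBySet R M ((I ^ (S.sup f) : Ideal R) : Set R) := by
    have hle : (⊤ : Submodule R M) ≤
        Submodule.torsionBySet R M ((I ^ (S.sup f) : Ideal R) : Set R) := by
      rw [← hS]
      refine Submodule.span_le.2 (fun s hs => ?_)
      exact hmono (Finset.le_sup hs) (hf s)
    exact hle Submodule.mem_top
  simpa using (Submodule.mem_torsionBySet_iff _ _).1 hm ⟨r, hr⟩

end AuxMain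

/-- If `M`, `N` are finitely generated with `M = Γ_I(M)` and `cd(I, N) = 1`
(i.e. `1` is the largest integer `i` with `H^i_I(N) ≠ 0`), then `H^i_I(M, N)` is finitely
generated for all `i ≥ 0`. -/
theorem genLocalCohomology_finite_of_torsion_of_cd_one [IsNoetherianRing R] (I : Ideal R)
    (M : Type u) [AddCommGroup M] [Module R M] [Module.Finite R M]
    (N : Type u) [AddCommGroup N] [Module R N] [Module.Finite R N]
    (hM : torsionGamma I M = ⊤)
    (hcd₁ : ¬ Subsingleton ((localCohomology I 1).obj (ModuleCat.of R N)))
    (hcd₂ : ∀ j, 1 < j → Subsingleton ((localCohomology I j).obj (ModuleCat.of R N))) :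
    ∀ i : ℕ, Module.Finite R (genLocalCohomology I i M (ModuleCat.of R N)) := by
  intro i
  obtain ⟨k, hk⟩ := exists_pow_smul_bot I M hM
  set G : ℕᵒᵖᵒᵖ ⥤ ModuleCat.{u} R :=
    ((modIdealPowersDiagram I M).op ⋙ Ext R (ModuleCat.{u} R) i).flip.obj (ModuleCat.of R N)
    with hG
  have hDiso : ∀ (t t' : ℕᵒᵖ) (w : t ⟶ t'), k ≤ unop t' →
      IsIso ((modIdealPowersDiagram I M).map w) := by
    intro t t' w h
    have hle : unop t' ≤ unop t := w.unop.down.down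
    have b1 : (I ^ (unop t) • ⊤ : Submodule R M) = ⊥ :=
      le_bot_iff.1 ((Submodule.smul_mono (Ideal.pow_le_pow_right (h.trans hle)) le_rfl).trans
        (le_of_eq hk))
    have b2 : (I ^ (unop t') • ⊤ : Submodule R M) = ⊥ :=
      le_bot_iff.1 ((Submodule.smul_mono (Ideal.pow_le_pow_right h) le_rfl).trans
        (le_of_eq hk))
    exact mapQ_isIso (b1.trans b2.symm) (by
      rw [Submodule.comap_id]
      exact Submodule.smul_mono (Ideal.pow_le_pow_right hle) le_rfl)
  have hiso : ∀ (a b : ℕᵒᵖᵒᵖ) (u : a ⟶ b), k ≤ a.unop.unop → IsIso (G.map u) := by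
    intro a b u h
    haveI := hDiso b.unop a.unop u.unop h
    have he : G.map u = ((Ext R (ModuleCat.{u} R) i).map
        ((modIdealPowersDiagram I M).map u.unop).op).app (ModuleCat.of R N) := rfl
    rw [he]
    infer_instance
  have hsurj : Function.Surjective (colimit.ι G (op (op k))) := by
    haveI := preservesSmallestFilteredColimits_of_preservesFilteredColimits
      (forget (ModuleCat.{u} R))
    intro x
    obtain ⟨j, y, rfl⟩ := Concrete.colimit_exists_rep G x
    rcases le_total j.unop.unop k with h | h
    · refine ⟨G.map ((homOfLE h).op.op : j ⟶ op (op k)) y, ?_⟩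
      have hw : colimit.ι G j =
          G.map ((homOfLE h).op.op : j ⟶ op (op k)) ≫ colimit.ι G (op (op k)) :=
        (colimit.w G _).symm
      rw [hw]
      rfl
    · haveI := hiso (op (op k)) j ((homOfLE h).op.op : op (op k) ⟶ j) le_rfl
      refine ⟨inv (G.map ((homOfLE h).op.op : op (op k) ⟶ j)) y, ?_⟩
      have hw : colimit.ι G j =
          inv (G.map ((homOfLE h).op.op : op (op k) ⟶ j)) ≫ colimit.ι G (op (op k)) := by
        rw [← colimit.w G ((homOfLE h).op.op : op (op k) ⟶ j), IsIso.inv_hom_id_assoc]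
      rw [hw]
      rfl
  haveI : Module.Finite R ↥(ModuleCat.of R N) := ‹Module.Finite R N›
  haveI : Module.Finite R (G.obj (op (op k))) :=
    ext_finite R (M ⧸ (I ^ k • ⊤ : Submodule R M)) (ModuleCat.of R N) i
  exact Module.Finite.of_surjective
    (colimit.ι G (op (op k))).hom hsurj
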